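/- Let R be a domain with fraction field K. Then the Pythagoras number of R is at least the Pythagoras number of K, i.e., if every sum of (n+1) squares in R is a sum of n squares in R, then every sum of (n+1) squares in K is a sum of n squares in K. -/
import Mathlib


/-- For a domain `R` with fraction field `K`, the Pythagoras number of `R` is at
least that of `K`: if every sum of `n+1` squares in `R` is a sum of `n` squares
in `R`, then every sum of `n+1` squares in `K` is a sum of `n` squares in `K`. -/
theorem pythagoras_number_fraction_field_le {R K : Type*} [CommRing R] [IsDomain R]
    [Field K] [Algebra R K] [IsFractionRing R K] (n : ℕ)
    (h : ∀ x : R, (∃ f : Fin (n + 1) → R, x = ∑ i, (f i) ^ 2) →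
      ∃ g : Fin n → R, x = ∑ i, (g i) ^ 2) :
    ∀ y : K, (∃ f : Fin (n + 1) → K, y = ∑ i, (f i) ^ 2) →
      ∃ g : Fin n → K, y = ∑ i, (g i) ^ 2 := by
  rintro y ⟨f, rfl⟩
  obtain ⟨b, hb⟩ := IsLocalization.exist_integer_multiples (nonZeroDivisors R) Finset.univ f
  choose a ha using fun i => hb i (Finset.mem_univ i)
  have hbne : (algebraMap R K) (b : R) ≠ 0 := by
    exact IsFractionRing.to_map_ne_zero_of_mem_nonZeroDivisors b.2
  obtain ⟨g, hg⟩ := h (∑ i, (a i) ^ 2) ⟨a, rfl⟩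
  refine ⟨fun i => algebraMap R K (g i) / algebraMap R K (b : R), ?_⟩
  have key : algebraMap R K (∑ i, (a i) ^ 2)
      = (algebraMap R K (b : R)) ^ 2 * ∑ i, (f i) ^ 2 := by
    rw [map_sum, Finset.mul_sum]
    refine Finset.sum_congr rfl fun i _ => ?_
    rw [map_pow, ha i]
    simp [Algebra.smul_def]
    ring
  rw [hg, map_sum] at key
  simp only [div_pow]
  rw [ ← Finset.sum_div, eq_div_iff (pow_ne_zero 2 hbne), mul_comm, ← key]
  simp [map_pow]
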